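/- Let k ≥ 2 be an integer, n = 6k, β = 2π/n, A_j = exp(iβj) ∈ ℂ (indices modulo n), and φ_{2k}(z) = (cos(2kβ/2)/cos(β/2))·exp(i(2k−1)β/2)·z, so that B_j := φ_{2k}(A_{j+1}) is the vertex A_jA_{j+2k} ∩ A_{j+1}A_{j+1+2k} of the (2k)-th inner n-gon 𝒜_{2k}. Then the four points A_0, A_{3k−1}, B_{2k−2} = φ_{2k}(A_{2k−1}), and B_{5k} = φ_{2k}(A_{5k+1}) are collinear over ℝ; that is, the (3k−1)-th diagonal A_0A_{3k−1} of the regular 6k-gon passes through two vertices of 𝒜_{2k}. -/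

import Mathlib

open Real

lemma key_collinear (θ c : ℝ)
    (h : (c : ℂ) * (Complex.exp ((θ : ℝ) * Complex.I) +
      Complex.exp ((-θ : ℝ) * Complex.I)) = 1) :
    Collinear ℝ ({1, -Complex.exp ((-(2*θ) : ℝ) * Complex.I),
      (c : ℂ) * -Complex.exp ((-(3*θ) : ℝ) * Complex.I),
      (c : ℂ) * Complex.exp ((θ : ℝ) * Complex.I)} : Set ℂ) := by
  set w : ℂ := Complex.exp ((θ : ℝ) * Complex.I) with hw
  have hw0 : w ≠ 0 := Complex.exp_ne_zero _
  have hc0 : (c : ℂ) ≠ 0 := by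
    intro h0
    rw [h0, zero_mul] at h
    exact one_ne_zero h.symm
  have hneg : ∀ t : ℝ, Complex.exp ((-t : ℝ) * Complex.I) =
      (Complex.exp ((t : ℝ) * Complex.I))⁻¹ := by
    intro t
    rw [← Complex.exp_neg]
    push_cast
    ring_nf
  have e2 : Complex.exp (((2*θ) : ℝ) * Complex.I) = w ^ 2 := by
    rw [pow_two, ← Complex.exp_add]
    congr 1
    push_cast
    ring
  have e3 : Complex.exp (((3*θ) : ℝ) * Complex.I) = w ^ 3 := by
    rw [pow_succ, ← e2, ← Complex.exp_add]
    congr 1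
    push_cast
    ring
  have h' : (c : ℂ) * w ^ 2 + c = w := by
    rw [hneg θ] at h
    field_simp at h
    linear_combination h
  rw [collinear_iff_of_mem (Set.mem_insert 1 _)]
  refine ⟨-(w⁻¹), ?_⟩
  intro p hp
  simp only [Set.mem_insert_iff, Set.mem_singleton_iff] at hp
  rcases hp with rfl | rfl | rfl | rfl
  · exact ⟨0, by simp⟩
  · refine ⟨1/c, ?_⟩
    rw [hneg, e2, Complex.real_smul, vadd_eq_add]
    push_cast
    field_simp
    linear_combination (-1) * h'
  · refine ⟨1/c - c, ?_⟩
    rw [hneg, e3, Complex.real_smul, vadd_eq_add]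
    push_cast
    field_simp
    linear_combination (-(c:ℂ) - w) * h'
  · refine ⟨c, ?_⟩
    rw [Complex.real_smul, vadd_eq_add]
    field_simp
    linear_combination h'

/-- in the regular `6k`-gon (`k ≥ 2`), with `B j = φ_{2k}(A (j+1))` the
vertices of the `2k`-th inner polygon, the four points
`A 0, A (3k−1), φ_{2k}(A (2k−1)), φ_{2k}(A (5k+1))` are collinear over ℝ. -/
theorem stmt_6 (k : ℤ) (hk : 2 ≤ k) (n : ℤ) (hn : n = 6 * k)
    (β : ℝ) (hβ : β = 2 * π / n)
    (A : ℤ → ℂ) (hA : ∀ j : ℤ, A j = Complex.exp ((β * j : ℝ) * Complex.I))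
    (φ : ℂ → ℂ)
    (hφ : ∀ z : ℂ, φ z = (Real.cos (2 * k * β / 2) / Real.cos (β / 2) : ℝ) *
      Complex.exp (((2 * k - 1) * β / 2 : ℝ) * Complex.I) * z) :
    Collinear ℝ ({A 0, A (3 * k - 1), φ (A (2 * k - 1)), φ (A (5 * k + 1))} : Set ℂ) := by
  have hk2 : (2:ℝ) ≤ (k:ℝ) := by exact_mod_cast hk
  have hk0 : (k:ℝ) ≠ 0 := by positivity
  set θ : ℝ := π / (6 * k) with hθ
  set c : ℝ := 1 / (2 * Real.cos θ) with hc
  have hβ2 : β = 2 * θ := by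
    rw [hβ, hn, hθ]
    push_cast
    field_simp
  have h6 : 6 * (k:ℝ) * θ = π := by
    rw [hθ]
    field_simp
  -- cos θ positive
  have hθpos : 0 < θ := by
    rw [hθ]; positivity
  have hθlt : θ < π / 2 := by
    rw [hθ]
    rw [div_lt_div_iff₀ (by positivity) (by norm_num)]
    nlinarith [Real.pi_pos]
  have hcos : 0 < Real.cos θ := Real.cos_pos_of_mem_Ioo ⟨by linarith, hθlt⟩
  have hcos0 : Real.cos θ ≠ 0 := ne_of_gt hcos
  -- exp combination helpers
  have hmul : ∀ a b : ℝ, Complex.exp ((a:ℝ) * Complex.I) * Complex.exp ((b:ℝ) * Complex.I)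
      = Complex.exp (((a+b):ℝ) * Complex.I) := by
    intro a b
    rw [← Complex.exp_add]
    push_cast
    ring_nf
  have hPI : ∀ a b : ℝ, a = π + b →
      Complex.exp ((a:ℝ) * Complex.I) = -Complex.exp ((b:ℝ) * Complex.I) := by
    intro a b hab
    rw [hab, Complex.ofReal_add, add_mul, Complex.exp_add, Complex.exp_pi_mul_I]
    ring
  have h2PI : ∀ a b : ℝ, a = 2*π + b →
      Complex.exp ((a:ℝ) * Complex.I) = Complex.exp ((b:ℝ) * Complex.I) := by
    intro a b hab
    rw [hab, Complex.ofReal_add, add_mul, Complex.exp_add]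
    push_cast
    rw [Complex.exp_two_pi_mul_I]
    ring
  -- coefficient of φ equals c
  have hcoef : Real.cos (2 * k * β / 2) / Real.cos (β / 2) = c := by
    have h1 : 2 * (k:ℝ) * β / 2 = π / 3 := by
      rw [hβ2]; linear_combination (1/3) * h6
    have h2 : β / 2 = θ := by rw [hβ2]; ring
    rw [h1, h2, Real.cos_pi_div_three, hc]
    rw [div_div]
  -- the four points
  have p0 : A 0 = 1 := by simp [hA]
  have p1 : A (3 * k - 1) = -Complex.exp ((-(2*θ) : ℝ) * Complex.I) := by
    rw [hA]
    exact hPI _ _ (by push_cast; rw [hβ2]; linear_combination h6)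
  have p2 : φ (A (2 * k - 1)) = (c:ℂ) * -Complex.exp ((-(3*θ) : ℝ) * Complex.I) := by
    rw [hφ, hA, mul_assoc, hmul, hcoef,
      hPI _ _ (show (2*(k:ℝ)-1)*β/2 + β * ((2*k-1 : ℤ):ℝ) = π + -(3*θ) by
        push_cast; rw [hβ2]; linear_combination h6)]
  have p3 : φ (A (5 * k + 1)) = (c:ℂ) * Complex.exp ((θ : ℝ) * Complex.I) := by
    rw [hφ, hA, mul_assoc, hmul, hcoef,
      h2PI _ _ (show (2*(k:ℝ)-1)*β/2 + β * ((5*k+1 : ℤ):ℝ) = 2*π + θ by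
        push_cast; rw [hβ2]; linear_combination 2 * h6)]
  rw [p0, p1, p2, p3]
  apply key_collinear
  have hsum : Complex.exp ((θ:ℝ) * Complex.I) + Complex.exp ((-θ:ℝ) * Complex.I)
      = 2 * (Real.cos θ : ℂ) := by
    rw [Complex.ofReal_cos]
    simp only [Complex.cos]
    push_cast
    ring
  rw [hsum, hc]
  have hC : Complex.cos (θ:ℂ) ≠ 0 := by
    rw [← Complex.ofReal_cos]; exact_mod_cast hcos0
  push_cast
  field_simp
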